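/- Let n and s be natural numbers with s < n, let X be uniformly distributed on {0,1}^n, and let F be a uniform random predicate on {0,1}^n (uniformly distributed over all 2^{2^n} functions {0,1}^n → {0,1}), independent of X. Then there exists a channel P_{S|X} from {0,1}^n to {0,1}^s (in fact a deterministic function S = σ(X) whose fibers all have size 2^{n−s}) such that d(F(X)|S F) ≥ (1/2)·C(2^{n−s}), where C(m) := binom(m, m/2)·2^{−m} and d(F(X)|S F) := Σ_{s',f} P_S(s')·P_F(f)·d(P_{F(X)|S=s',F=f}). -/

import Mathlib

open Finset

/-- The distance of a distribution `P` on a finite set `Z` from the uniform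
distribution: `d(P) = (1/2) ∑_z |P z - 1/|Z||`. -/
noncomputable def distUnif {Z : Type*} [Fintype Z] (P : Z → ℝ) : ℝ :=
  (1 / 2) * ∑ z, |P z - 1 / (Fintype.card Z : ℝ)|

/-- For a joint distribution `P` on `W × Z` (given as `P : W → Z → ℝ`), the expected
distance of `Z` from uniform given `W`: `d(Z|W) = ∑_w P_W(w) · d(P_{Z|W=w})`. -/
noncomputable def dCond {W Z : Type*} [Fintype W] [Fintype Z] (P : W → Z → ℝ) : ℝ :=
  ∑ w, (∑ z, P w z) * distUnif (fun z => P w z / ∑ z', P w z')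

/-- `C(m) = binom(m, m/2) · 2^{-m}`. -/
noncomputable def Cfun (m : ℕ) : ℝ := (m.choose (m / 2) : ℝ) / (2 : ℝ) ^ m

section Aux

lemma tele_aux (m h : ℕ) (hm : m = 2*h) (hh : 1 ≤ h) (r : ℕ) (hr : r ≤ h + 1) :
    ∑ j ∈ range r, (m.choose j : ℝ) * ((m : ℝ) - 2*j)
      = if r = 0 then 0 else (m : ℝ) * ((m-1).choose (r-1)) := by
  set F : ℕ → ℝ := fun j => if j = 0 then 0 else (m : ℝ) * ((m-1).choose (j-1)) with hF
  have key : ∀ j ∈ range r, (m.choose j : ℝ) * ((m:ℝ) - 2*j) = F (j+1) - F j := by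
    intro j hj
    have hjh : j ≤ h := by have := mem_range.1 hj; omega
    match j with
    | 0 => simp [hF]
    | (k+1) =>
      have hk1m : k + 1 ≤ m := by omega
      have f1 : ((m-1).choose (k+1)) * m = m.choose (k+1) * (m - (k+1)) := by
        have := Nat.choose_mul_succ_eq (m-1) (k+1)
        have hm1 : m - 1 + 1 = m := by omega
        rwa [hm1] at this
      have f2 : m * ((m-1).choose k) = m.choose (k+1) * (k+1) := by
        have := Nat.add_one_mul_choose_eq (m-1) k
        have hm1 : m - 1 + 1 = m := by omega
        rwa [hm1] at this
      have f1' : (((m-1).choose (k+1)) : ℝ) * m = (m.choose (k+1) : ℝ) * ((m:ℝ) - ((k:ℝ)+1)) := by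
        have := congrArg (fun x : ℕ => (x : ℝ)) f1
        push_cast [Nat.cast_sub hk1m] at this
        linarith [this]
      have f2' : (m:ℝ) * (((m-1).choose k) : ℝ) = (m.choose (k+1) : ℝ) * ((k:ℝ)+1) := by
        exact_mod_cast congrArg (fun x : ℕ => (x : ℝ)) f2
      simp only [hF, if_neg (Nat.succ_ne_zero k), Nat.add_sub_cancel]
      push_cast
      ring_nf
      ring_nf at f1' f2'
      linarith
  rw [Finset.sum_congr rfl key, Finset.sum_range_sub]
  match r with
  | 0 => simp [hF]
  | (q+1) => simp [hF]

lemma L1 (m h : ℕ) (hm : m = 2*h) (hh : 1 ≤ h) :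
    ∑ j ∈ range (m + 1), (m.choose j : ℝ) * |2*(j:ℝ) - m|
      = (m : ℝ) * (m.choose h) := by
  have hsplit : ∑ j ∈ range (m + 1), ((m).choose j : ℝ) * |2*(j:ℝ) - m|
      = (∑ j ∈ range (h+1), ((m).choose j : ℝ) * |2*(j:ℝ) - m|)
        + ∑ j ∈ Ico (h+1) (m+1), ((m).choose j : ℝ) * |2*(j:ℝ) - m| := by
    rw [range_eq_Ico, ← Finset.sum_Ico_consecutive _ (Nat.zero_le (h+1)) (by omega)]
    rw [range_eq_Ico]
  have habs1 : ∀ j ∈ range (h+1), ((m).choose j : ℝ) * |2*(j:ℝ) - m|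
      = ((m).choose j : ℝ) * ((m : ℝ) - 2*j) := by
    intro j hj
    have hjh : j ≤ h := by have := mem_range.1 hj; omega
    have hj' : 2*(j:ℝ) - m ≤ 0 := by
      have h1 : (j:ℝ) ≤ h := by exact_mod_cast hjh
      have h2 : (m:ℝ) = 2*h := by exact_mod_cast hm
      linarith
    rw [abs_of_nonpos hj']; ring
  have hS1 : ∑ j ∈ range (h+1), ((m).choose j : ℝ) * |2*(j:ℝ) - m|
      = (m:ℝ) * ((m-1).choose h) := by
    rw [Finset.sum_congr rfl habs1, tele_aux m h hm hh (h+1) le_rfl]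
    simp
  have hS2 : ∑ j ∈ Ico (h+1) (m+1), ((m).choose j : ℝ) * |2*(j:ℝ) - m|
      = (m:ℝ) * ((m-1).choose (h-1)) := by
    have hre : ∑ j ∈ Ico (h+1) (m+1), ((m).choose j : ℝ) * |2*(j:ℝ) - m|
        = ∑ i ∈ range h, ((m).choose i : ℝ) * ((m:ℝ) - 2*i) := by
      refine Finset.sum_nbij' (i := fun j => m - j) (j := fun i => m - i) ?_ ?_ ?_ ?_ ?_
      · intro a ha; simp only [mem_Ico] at ha; simp only [mem_range]; omega
      · intro a ha; simp only [mem_range] at ha; simp only [mem_Ico]; omega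
      · intro a ha; simp only [mem_Ico] at ha; omega
      · intro a ha; simp only [mem_range] at ha; omega
      · intro a ha
        simp only [mem_Ico] at ha
        have ham : a ≤ m := by omega
        rw [Nat.choose_symm ham]
        have hcast : ((m - a : ℕ) : ℝ) = (m:ℝ) - a := by
          push_cast [Nat.cast_sub ham]; ring
        rw [hcast]
        have hpos : 0 ≤ 2*(a:ℝ) - m := by
          have h1 : (h:ℝ) + 1 ≤ a := by exact_mod_cast ha.1
          have h2 : (m:ℝ) = 2*h := by exact_mod_cast hm
          linarith
        rw [abs_of_nonneg hpos]; ring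
    rw [hre, tele_aux m h hm hh h (by omega)]
    have : h ≠ 0 := by omega
    simp [this]
  rw [hsplit, hS1, hS2]
  have hpascal : (m-1).choose (h-1) + (m-1).choose h = m.choose h := by
    have h2 : h = (h-1) + 1 := by omega
    calc (m-1).choose (h-1) + (m-1).choose h
        = (m-1).choose (h-1) + (m-1).choose ((h-1)+1) := by rw [← h2]
      _ = ((m-1)+1).choose ((h-1)+1) := (Nat.choose_succ_succ _ _).symm
      _ = m.choose h := by congr 1 <;> omega
  have hp : ((m-1).choose (h-1) : ℝ) + ((m-1).choose h : ℝ) = (m.choose h : ℝ) := by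
    exact_mod_cast congrArg (fun x : ℕ => (x:ℝ)) hpascal
  linear_combination (m:ℝ) * hp

lemma fiber_card {α : Type*} [Fintype α] [DecidableEq α] (A : Finset α) (S : Finset α)
    (hS : S ⊆ A) :
    (univ.filter fun f : α → Bool => A.filter (fun x => f x = true) = S).card
      = 2 ^ (Fintype.card α - A.card) := by
  have hset : (univ.filter fun f : α → Bool => A.filter (fun x => f x = true) = S)
      = Fintype.piFinset (fun x => if x ∈ A then ({decide (x ∈ S)} : Finset Bool) else univ) := by
    ext f
    simp only [mem_filter, mem_univ, true_and, Fintype.mem_piFinset]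
    constructor
    · intro hf x
      by_cases hxA : x ∈ A
      · simp only [if_pos hxA, mem_singleton]
        by_cases hxS : x ∈ S
        · have : x ∈ A.filter (fun x => f x = true) := hf ▸ hxS
          simp only [mem_filter] at this
          simp [this.2, hxS]
        · have : x ∉ A.filter (fun x => f x = true) := hf ▸ hxS
          simp only [mem_filter, not_and] at this
          have := this hxA
          simp [hxS]
          exact Bool.not_eq_true _ ▸ (by simpa using this)
      · simp [hxA]
    · intro hf
      ext y
      simp only [mem_filter]
      constructor
      · rintro ⟨hyA, hyt⟩
        have := hf y
        rw [if_pos hyA, mem_singleton] at this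
        rw [hyt] at this
        simpa using this.symm
      · intro hyS
        refine ⟨hS hyS, ?_⟩
        have := hf y
        rw [if_pos (hS hyS), mem_singleton] at this
        simpa [hyS] using this
  rw [hset, Fintype.card_piFinset]
  have hcards : ∀ x : α, (if x ∈ A then ({decide (x ∈ S)} : Finset Bool) else univ).card
      = if x ∈ A then 1 else 2 := by
    intro x; by_cases hx : x ∈ A <;> simp [hx]
  rw [Finset.prod_congr rfl (fun x _ => hcards x), Finset.prod_ite, Finset.prod_const,
    Finset.prod_const, one_pow, one_mul]
  congr 1
  have : univ.filter (fun x => ¬ x ∈ A) = Aᶜ := by ext x; simp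
  rw [this, Finset.card_compl]

lemma L2 {α : Type*} [Fintype α] [DecidableEq α] (A : Finset α) (g : ℕ → ℝ) :
    ∑ f : α → Bool, g ((A.filter fun x => f x = true)).card
      = (2:ℝ) ^ (Fintype.card α - A.card) *
        ∑ j ∈ range (A.card + 1), (A.card.choose j : ℝ) * g j := by
  have hmap : ∀ f : α → Bool, f ∈ (univ : Finset (α → Bool)) →
      (A.filter fun x => f x = true) ∈ A.powerset :=
    fun f _ => mem_powerset.2 (filter_subset _ _)
  rw [← Finset.sum_fiberwise_of_maps_to hmap]
  have hinner : ∀ S ∈ A.powerset,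
      (∑ f ∈ univ.filter (fun f : α → Bool => A.filter (fun x => f x = true) = S),
        g ((A.filter fun x => f x = true)).card)
      = (2:ℝ) ^ (Fintype.card α - A.card) * g S.card := by
    intro S hS
    have h1 : ∀ f ∈ univ.filter (fun f : α → Bool => A.filter (fun x => f x = true) = S),
        g ((A.filter fun x => f x = true)).card = g S.card := by
      intro f hf
      rw [(mem_filter.1 hf).2]
    rw [Finset.sum_congr rfl h1, Finset.sum_const,
      fiber_card A S (mem_powerset.1 hS), nsmul_eq_mul]
    push_cast
    ring
  rw [Finset.sum_congr rfl hinner, ← Finset.mul_sum]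
  congr 1
  rw [Finset.sum_powerset_apply_card]
  simp only [nsmul_eq_mul]

lemma key {α : Type*} [Fintype α] [DecidableEq α] (c : ℝ) (hc : 0 < c)
    (q : α → Prop) [DecidablePred q] (hq : (univ.filter q).card ≠ 0) (f : α → Bool) :
    (∑ b, ∑ _x ∈ univ.filter (fun x => q x ∧ f x = b), c) *
      distUnif (fun b => (∑ _x ∈ univ.filter (fun x => q x ∧ f x = b), c) /
        ∑ b', ∑ _x ∈ univ.filter (fun x => q x ∧ f x = b'), c)
    = (c / 2) * |2 * ((((univ.filter q)).filter (fun x => f x = true)).card : ℝ) -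
        ((univ.filter q).card : ℝ)| := by
  classical
  set A := univ.filter q with hA
  have hform : ∀ b, (univ.filter (fun x => q x ∧ f x = b)) = A.filter (fun x => f x = b) := by
    intro b; rw [hA, Finset.filter_filter]
  simp only [hform, Finset.sum_const, nsmul_eq_mul, distUnif, Fintype.card_bool, Nat.cast_ofNat,
    Fintype.sum_bool]
  set k1 := (A.filter fun x => f x = true).card with hk1
  set k0 := (A.filter fun x => f x = false).card with hk0
  have hsum : k1 + k0 = A.card := by
    rw [hk1, hk0]
    have h2 : (A.filter fun x => f x = false) = A.filter (fun x => ¬ (f x = true)) := by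
      apply Finset.filter_congr; intro x _; simp [Bool.not_eq_true]
    rw [h2]
    exact Finset.card_filter_add_card_filter_not _
  set M : ℝ := (A.card : ℝ) with hM
  have hMpos : 0 < M := by
    rw [hM]
    exact_mod_cast Nat.pos_of_ne_zero hq
  have hdenom : (k1:ℝ) * c + (k0:ℝ) * c = M * c := by
    rw [hM, ← hsum]; push_cast; ring
  rw [hdenom]
  have hdiv : ∀ x : ℝ, x * c / (M * c) = x / M := fun x =>
    mul_div_mul_right x M hc.ne'
  rw [hdiv, hdiv]
  have e0 : (k0:ℝ) = M - k1 := by rw [hM, ← hsum]; push_cast; ring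
  rw [e0]
  have ha : |(M - (k1:ℝ))/M - 1/2| = |(k1:ℝ)/M - 1/2| := by
    rw [show (M - (k1:ℝ))/M - 1/2 = -((k1:ℝ)/M - 1/2) by field_simp; ring, abs_neg]
  have hb : |(k1:ℝ)/M - 1/2| = |2*(k1:ℝ) - M|/(2*M) := by
    rw [show (k1:ℝ)/M - 1/2 = (2*(k1:ℝ) - M)/(2*M) by field_simp, abs_div,
      abs_of_pos (by positivity : (0:ℝ) < 2*M)]
  rw [ha, hb]
  field_simp
  ring

end Aux

/-- **Lemma `lem:classical`**: let `s < n`, let `X` be uniform on `{0,1}^n` and let `F`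
be a uniform random predicate on `{0,1}^n` (uniform over all `2^(2^n)` functions
`{0,1}^n → {0,1}`), independent of `X`. Then there is a channel from `{0,1}^n` to
`{0,1}^s` — in fact a deterministic function `σ` all of whose fibers have size
`2^(n-s)` — such that `d(F(X)|S F) ≥ (1/2)·C(2^(n-s))`, where `S = σ(X)` and
`d(F(X)|S F)` is computed from the joint distribution
`P((t,f), b) = ∑_{x : σ(x)=t, f(x)=b} 2^{-n} · P_F(f)` with
`P_F(f) = 1/|{0,1}^{2^n}|` the uniform distribution on predicates. -/
theorem lemma_classical (n s : ℕ) (hs : s < n) :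
    ∃ σ : (Fin n → Bool) → (Fin s → Bool),
      (∀ t, (univ.filter (fun x => σ x = t)).card = 2 ^ (n - s)) ∧
      dCond (fun (p : (Fin s → Bool) × ((Fin n → Bool) → Bool)) (b : Bool) =>
          ∑ x ∈ univ.filter (fun x => σ x = p.1 ∧ p.2 x = b),
            (1 / (Fintype.card (Fin n → Bool) : ℝ)) *
              (1 / (Fintype.card ((Fin n → Bool) → Bool) : ℝ)))
        ≥ (1 / 2) * Cfun (2 ^ (n - s)) := by
  classical
  have hns : s + (n - s) = n := by omega
  let e : (Fin n → Bool) ≃ (Fin s → Bool) × (Fin (n - s) → Bool) :=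
    ((Equiv.arrowCongr (finCongr hns).symm (Equiv.refl Bool)).trans
      (Equiv.arrowCongr finSumFinEquiv (Equiv.refl Bool)).symm).trans
      (Equiv.sumArrowEquivProdArrow _ _ _)
  set m := 2 ^ (n - s) with hmdef
  have hfib : ∀ t : Fin s → Bool,
      (univ.filter (fun x : Fin n → Bool => (e x).1 = t)).card = m := by
    intro t
    have h1 : (univ.filter (fun x : Fin n → Bool => (e x).1 = t)).card
        = (univ.filter (fun p : (Fin s → Bool) × (Fin (n-s) → Bool) => p.1 = t)).card := by
      refine Finset.card_equiv e fun x => ?_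
      simp
    have h2 : (univ.filter (fun p : (Fin s → Bool) × (Fin (n-s) → Bool) => p.1 = t))
        = {t} ×ˢ (univ : Finset (Fin (n-s) → Bool)) := by
      ext p
      simp only [mem_filter, mem_univ, true_and, Finset.mem_product, mem_singleton]
      tauto
    rw [h1, h2, Finset.card_product, Finset.card_singleton, one_mul, Finset.card_univ]
    simp [hmdef]
  refine ⟨fun x => (e x).1, hfib, ?_⟩
  set h2 := 2 ^ (n - s - 1) with hh2def
  have hm2 : m = 2 * h2 := by
    rw [hmdef, hh2def, ← pow_succ']
    congr 1
    omega
  have hh2 : 1 ≤ h2 := Nat.one_le_two_pow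
  set c : ℝ := (1 / (Fintype.card (Fin n → Bool) : ℝ)) *
      (1 / (Fintype.card ((Fin n → Bool) → Bool) : ℝ)) with hcdef
  have hcard1 : Fintype.card (Fin n → Bool) = 2 ^ n := by simp
  have hcard2 : Fintype.card ((Fin n → Bool) → Bool) = 2 ^ (2 ^ n) := by
    rw [Fintype.card_fun, Fintype.card_bool, hcard1]
  have hc0 : 0 < c := by
    rw [hcdef, hcard1, hcard2]
    positivity
  refine ge_of_eq ?_
  simp only [dCond, Fintype.sum_prod_type]
  have hrow : ∀ t : Fin s → Bool,
      (∑ f : (Fin n → Bool) → Bool,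
        ((∑ b, ∑ _x ∈ univ.filter (fun x : Fin n → Bool => (e x).1 = t ∧ f x = b), c) *
          distUnif (fun b => (∑ _x ∈ univ.filter (fun x : Fin n → Bool => (e x).1 = t ∧ f x = b), c) /
            ∑ b', ∑ _x ∈ univ.filter (fun x : Fin n → Bool => (e x).1 = t ∧ f x = b'), c)))
      = (c/2) * ((2:ℝ)^(2^n - m) * ((m:ℝ) * (m.choose h2 : ℝ))) := by
    intro t
    have hA : (univ.filter (fun x : Fin n → Bool => (e x).1 = t)).card = m := hfib t
    have hqne : (univ.filter (fun x : Fin n → Bool => (e x).1 = t)).card ≠ 0 := by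
      rw [hA, hmdef]; positivity
    have h1 : ∀ f : (Fin n → Bool) → Bool,
        ((∑ b, ∑ _x ∈ univ.filter (fun x : Fin n → Bool => (e x).1 = t ∧ f x = b), c) *
          distUnif (fun b => (∑ _x ∈ univ.filter (fun x : Fin n → Bool => (e x).1 = t ∧ f x = b), c) /
            ∑ b', ∑ _x ∈ univ.filter (fun x : Fin n → Bool => (e x).1 = t ∧ f x = b'), c))
        = (c / 2) * |2 * ((((univ.filter (fun x : Fin n → Bool => (e x).1 = t))).filter
              (fun x => f x = true)).card : ℝ) -
            ((univ.filter (fun x : Fin n → Bool => (e x).1 = t)).card : ℝ)| :=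
      fun f => key c hc0 _ hqne f
    rw [Finset.sum_congr rfl (fun f _ => h1 f), ← Finset.mul_sum]
    congr 1
    simp only [hA]
    have hL2 := L2 (univ.filter (fun x : Fin n → Bool => (e x).1 = t))
      (fun j => |2*(j:ℝ) - (m:ℝ)|)
    rw [hA, hcard1] at hL2
    rw [hL2]
    congr 1
    exact L1 m h2 hm2 hh2
  rw [Finset.sum_congr rfl (fun t _ => hrow t), Finset.sum_const, Finset.card_univ]
  have hcards : Fintype.card (Fin s → Bool) = 2 ^ s := by simp
  rw [hcards, nsmul_eq_mul, hcdef, hcard1, hcard2, Cfun]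
  have hmh : m / 2 = h2 := by omega
  rw [hmh]
  have hmle : m ≤ 2 ^ n := by
    rw [hmdef]
    exact Nat.pow_le_pow_right (by norm_num) (by omega)
  have hE1 : (2:ℝ)^(2^n - m) * (2:ℝ)^m = (2:ℝ)^(2^n) := by
    rw [← pow_add]; congr 1; omega
  have hE2 : (2:ℝ)^s * (2:ℝ)^(n-s) = (2:ℝ)^n := by
    rw [← pow_add, hns]
  have hmr : (m:ℝ) = (2:ℝ)^(n-s) := by rw [hmdef]; push_cast; ring
  push_cast
  rw [hmr, ← hE1, ← hE2]
  field_simp
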